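/- arXiv:1801.09018 — 3 statements merged into one kernel-verified Lean document; each statement's English description precedes it below -/
import Mathlib

section
/- Under permutation-invariance and interference, for every k ≤ K the quantity I(X_i; Y_k | X_{[i−1]}) is strictly increasing in i: for all integers 1 ≤ i < j ≤ k ≤ K, I(X_i; Y_k | X_{[i−1]}) < I(X_j; Y_k | X_{[j−1]}). -/
open scoped Classical
open Finset

noncomputable section

namespace RAC

variable {𝓧 𝓨 : Type*} [Fintype 𝓧] [Fintype 𝓨]

/-- Shannon entropy of a pmf on a finite type (natural logarithm, `0 · ln 0 = 0`). -/
def entropy {α : Type*} [Fintype α] (q : α → ℝ) : ℝ := ∑ a, Real.negMulLog (q a)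

/-- Reduced channel `W_k`: the last `K − k` transmitters send the silence symbol `x0`. -/
def redW {K : ℕ} (W : (Fin K → 𝓧) → 𝓨 → ℝ) (x0 : 𝓧) (k : ℕ)
    (x : Fin k → 𝓧) (y : 𝓨) : ℝ :=
  W (fun i => if h : (i : ℕ) < k then x ⟨i, h⟩ else x0) y

/-- Joint pmf of `(X_{[k]}, Y_k)` under i.i.d. inputs `pX`. -/
def joint {K : ℕ} (W : (Fin K → 𝓧) → 𝓨 → ℝ) (x0 : 𝓧) (pX : 𝓧 → ℝ) (k : ℕ)
    (xy : (Fin k → 𝓧) × 𝓨) : ℝ :=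
  (∏ i, pX (xy.1 i)) * redW W x0 k xy.1 xy.2

/-- Marginal pmf of `(X_S, Y)` for `S ⊆ [k]`. -/
def margXY {k : ℕ} (P : ((Fin k → 𝓧) × 𝓨) → ℝ) (S : Finset (Fin k))
    (uy : (S → 𝓧) × 𝓨) : ℝ :=
  ∑ x : Fin k → 𝓧, if ∀ i : S, x i.1 = uy.1 i then P (x, uy.2) else 0

/-- Marginal pmf of `X_S` for `S ⊆ [k]`. -/
def margX {k : ℕ} (P : ((Fin k → 𝓧) × 𝓨) → ℝ) (S : Finset (Fin k))
    (u : S → 𝓧) : ℝ :=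
  ∑ x : Fin k → 𝓧, ∑ y : 𝓨, if ∀ i : S, x i.1 = u i then P (x, y) else 0

/-- Conditional mutual information
`I(X_A; Y | X_B) = (H(Y,X_B) − H(X_B)) − (H(Y,X_{A∪B}) − H(X_{A∪B}))`. -/
def condMI {k : ℕ} (P : ((Fin k → 𝓧) × 𝓨) → ℝ) (A B : Finset (Fin k)) : ℝ :=
  (entropy (margXY P B) - entropy (margX P B))
    - (entropy (margXY P (A ∪ B)) - entropy (margX P (A ∪ B)))

/-- The index set `[s]` (`{0,…,s−1}` in 0-based indexing) inside `Fin k`. -/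
def idx (k s : ℕ) : Finset (Fin k) := Finset.univ.filter (fun i => (i : ℕ) < s)

/-- The index set `[a+1 : b]` (`{a,…,b−1}` in 0-based indexing) inside `Fin k`. -/
def idxR (k a b : ℕ) : Finset (Fin k) :=
  Finset.univ.filter (fun i => a ≤ (i : ℕ) ∧ (i : ℕ) < b)

/-- Output pmf `P_{Y_k}`. -/
def outP {K : ℕ} (W : (Fin K → 𝓧) → 𝓨 → ℝ) (x0 : 𝓧) (pX : 𝓧 → ℝ) (k : ℕ)
    (y : 𝓨) : ℝ :=
  ∑ x : Fin k → 𝓧, joint W x0 pX k (x, y)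

end RAC

set_option linter.unusedSectionVars false
set_option maxHeartbeats 1000000

namespace RACAux
open RAC
open RAC

variable {α β γ : Type*} [Fintype α] [Fintype β] [Fintype γ]

/-- Pushforward of a mass function along a map. -/
def push (q : α → ℝ) (F : α → β) : β → ℝ := fun b => ∑ a, if F a = b then q a else 0

lemma push_nonneg {q : α → ℝ} (h : ∀ a, 0 ≤ q a) (F : α → β) (b : β) : 0 ≤ push q F b :=
  Finset.sum_nonneg fun a _ => by by_cases hf : F a = b <;> simp [hf, h a]

lemma sum_push (q : α → ℝ) (F : α → β) : ∑ b, push q F b = ∑ a, q a := by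
  simp only [push]
  rw [Finset.sum_comm]
  simp

lemma push_push (q : α → ℝ) (F : α → β) (G : β → γ) :
    push (push q F) G = push q (G ∘ F) := by
  funext c
  simp only [push, Function.comp]
  have : ∀ b : β, (if G b = c then (∑ a, if F a = b then q a else 0) else 0)
      = ∑ a, (if G b = c then (if F a = b then q a else 0) else 0) := by
    intro b; by_cases h : G b = c <;> simp [h]
  rw [Finset.sum_congr rfl (fun b _ => this b), Finset.sum_comm]
  refine Finset.sum_congr rfl fun a _ => ?_
  rw [Finset.sum_eq_single (F a)]
  · by_cases h : G (F a) = c <;> simp [h]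
  · intro b _ hb
    by_cases h : G b = c <;> simp [h, Ne.symm hb]
  · simp

lemma push_comp_equiv (q : α → ℝ) (F : α → β) (e : β ≃ γ) :
    push q (fun a => e (F a)) = fun c => push q F (e.symm c) := by
  funext c
  simp only [push]
  refine Finset.sum_congr rfl fun a _ => ?_
  rw [show (e (F a) = c) = (F a = e.symm c) by simp [Equiv.eq_symm_apply]]

lemma entropy_comp_equiv (e : α ≃ β) (q : β → ℝ) : entropy (fun a => q (e a)) = entropy q := by
  simp only [entropy]
  exact Equiv.sum_comp e (fun b => Real.negMulLog (q b))

lemma entropy_push_comp_equiv (q : α → ℝ) (F : α → β) (e : β ≃ γ) :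
    entropy (push q (fun a => e (F a))) = entropy (push q F) := by
  rw [push_comp_equiv]
  have := entropy_comp_equiv e.symm (push q F)
  simpa using this

lemma push_precomp_invariant (q : α → ℝ) (F : α → β) (e : α ≃ α) (hq : ∀ a, q (e a) = q a) :
    push q (fun a => F (e a)) = push q F := by
  funext b
  simp only [push]
  calc ∑ a, (if F (e a) = b then q a else 0)
      = ∑ a, (if F (e a) = b then q (e a) else 0) := by
        refine Finset.sum_congr rfl fun a _ => by rw [hq]
    _ = ∑ a, (if F a = b then q a else 0) := Equiv.sum_comp e (fun a => if F a = b then q a else 0)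



variable {U V W Z Y : Type*} [Fintype U] [Fintype V] [Fintype W] [Fintype Z] [Fintype Y]

lemma marg1 (q : U × V × W → ℝ) (u : U) (w : W) :
    push q (fun p => (p.1, p.2.2)) (u, w) = ∑ v, q (u, v, w) := by
  simp only [push, Fintype.sum_prod_type, Prod.ext_iff]
  rw [Finset.sum_eq_single u]
  · refine Finset.sum_congr rfl fun v _ => ?_
    rw [Finset.sum_eq_single w] <;> simp_all
  · intro u' _ hu; refine Finset.sum_eq_zero fun v _ => Finset.sum_eq_zero fun w' _ => by
      simp [hu]
  · simp

lemma marg2 (q : U × V × W → ℝ) (v : V) (w : W) :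
    push q (fun p => (p.2.1, p.2.2)) (v, w) = ∑ u, q (u, v, w) := by
  simp only [push, Fintype.sum_prod_type, Prod.ext_iff]
  refine Finset.sum_congr rfl fun u _ => ?_
  rw [Finset.sum_eq_single v]
  · rw [Finset.sum_eq_single w] <;> simp_all
  · intro v' _ hv; refine Finset.sum_eq_zero fun w' _ => by simp [hv]
  · simp

lemma marg3 (q : U × V × W → ℝ) (w : W) :
    push q (fun p => p.2.2) w = ∑ u, ∑ v, q (u, v, w) := by
  simp only [push, Fintype.sum_prod_type]
  refine Finset.sum_congr rfl fun u _ => Finset.sum_congr rfl fun v _ => ?_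
  rw [Finset.sum_eq_single w] <;> simp_all

lemma marg4 (q : U × V × W → ℝ) (u : U) (v : V) :
    push q (fun p => (p.1, p.2.1)) (u, v) = ∑ w, q (u, v, w) := by
  simp only [push, Fintype.sum_prod_type, Prod.ext_iff]
  rw [Finset.sum_eq_single u]
  · rw [Finset.sum_eq_single v]
    · simp
    · intro v' _ hv; refine Finset.sum_eq_zero fun w _ => by simp [hv]
    · simp
  · intro u' _ hu; refine Finset.sum_eq_zero fun v' _ => Finset.sum_eq_zero fun w _ => by
      simp [hu]
  · simp



section Chunk3
variable {𝓧 𝓨 : Type*} [Fintype 𝓧] [Fintype 𝓨]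

lemma margXY_eq_push {k : ℕ} (P : ((Fin k → 𝓧) × 𝓨) → ℝ) (S : Finset (Fin k)) :
    margXY P S = push P (fun xy => ((fun i : S => xy.1 i.1), xy.2)) := by
  funext uy
  obtain ⟨u, y⟩ := uy
  simp only [margXY, push, Fintype.sum_prod_type, Prod.ext_iff]
  refine Finset.sum_congr rfl fun x _ => ?_
  by_cases hA : ∀ i : S, x i.1 = u i
  · have h2 : ((fun i : S => x i.1) = u) := funext fun i => hA i
    rw [if_pos hA]
    have h3 : ∀ y' : 𝓨, (((fun i : S => x i.1) = u) ∧ y' = y) = (y' = y) := by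
      intro y'; simp [h2]
    simp only [h3]
    rw [Finset.sum_ite_eq' Finset.univ y (fun y' => P (x, y'))]
    simp
  · have h2 : ((fun i : S => x i.1) ≠ u) := fun h => hA (fun i => congrFun h i)
    rw [if_neg hA]
    have h3 : ∀ y' : 𝓨, (((fun i : S => x i.1) = u) ∧ y' = y) = False := by
      intro y'; simp [h2]
    simp only [h3]
    simp

lemma margX_eq_push {k : ℕ} (P : ((Fin k → 𝓧) × 𝓨) → ℝ) (S : Finset (Fin k)) :
    margX P S = push P (fun xy => (fun i : S => xy.1 i.1)) := by
  funext u
  simp only [margX, push, Fintype.sum_prod_type, funext_iff]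

lemma outP_eq_push {K k : ℕ} (W : (Fin K → 𝓧) → 𝓨 → ℝ) (x0 : 𝓧) (pX : 𝓧 → ℝ) :
    outP W x0 pX k = push (joint W x0 pX k) Prod.snd := by
  funext y
  simp only [outP, push, Fintype.sum_prod_type]
  refine Finset.sum_congr rfl fun x _ => ?_
  simp

lemma sum_pi_ite {k : ℕ} (pX : 𝓧 → ℝ) (hp1 : ∑ a, pX a = 1) (S : Finset (Fin k))
    (v : Fin k → 𝓧) :
    ∑ x : Fin k → 𝓧, (if ∀ i ∈ S, x i = v i then ∏ i, pX (x i) else 0)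
      = ∏ i ∈ S, pX (v i) := by
  have key : ∀ x : Fin k → 𝓧, (if ∀ i ∈ S, x i = v i then ∏ i, pX (x i) else 0)
      = ∏ i, (if i ∈ S then (if x i = v i then pX (x i) else 0) else pX (x i)) := by
    intro x
    by_cases h : ∀ i ∈ S, x i = v i
    · rw [if_pos h]
      refine Finset.prod_congr rfl fun i _ => ?_
      by_cases hi : i ∈ S <;> simp [hi, h i]
    · rw [if_neg h]; push_neg at h; obtain ⟨i0, hi0S, hi0⟩ := h
      refine (Finset.prod_eq_zero (Finset.mem_univ i0) ?_).symm
      simp [hi0S, hi0]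
  rw [Finset.sum_congr rfl fun x _ => key x]
  have := (Fintype.prod_sum (fun (i : Fin k) (c : 𝓧) =>
    if i ∈ S then (if c = v i then pX c else 0) else pX c)).symm
  rw [this]
  have : ∀ i : Fin k, (∑ c, if i ∈ S then (if c = v i then pX c else 0) else pX c)
      = (if i ∈ S then pX (v i) else 1) := by
    intro i
    by_cases hi : i ∈ S <;> simp [hi, hp1]
  rw [Finset.prod_congr rfl fun i _ => this i, Fintype.prod_ite_mem]

lemma entropy_prod {A B : Type*} [Fintype A] [Fintype B] (f : A → ℝ) (g : B → ℝ) :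
    entropy (fun p : A × B => f p.1 * g p.2)
      = (∑ b, g b) * entropy f + (∑ a, f a) * entropy g := by
  simp only [entropy, Fintype.sum_prod_type, Real.negMulLog_mul, Finset.sum_add_distrib]
  have e1 : ∑ a : A, ∑ b : B, g b * Real.negMulLog (f a)
      = (∑ b, g b) * ∑ a : A, Real.negMulLog (f a) := by
    rw [Finset.mul_sum]
    exact Finset.sum_congr rfl fun a _ => by rw [Finset.sum_mul]
  have e2 : ∑ a : A, ∑ b : B, f a * Real.negMulLog (g b)
      = (∑ a, f a) * ∑ b : B, Real.negMulLog (g b) := by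
    rw [Finset.sum_mul]
    exact Finset.sum_congr rfl fun a _ => by rw [Finset.mul_sum]
  rw [e1, e2]

lemma joint_nonneg {K k : ℕ} (W : (Fin K → 𝓧) → 𝓨 → ℝ) (x0 : 𝓧) (pX : 𝓧 → ℝ)
    (hW0 : ∀ x y, 0 ≤ W x y) (hp0 : ∀ a, 0 ≤ pX a) (xy : (Fin k → 𝓧) × 𝓨) :
    0 ≤ joint W x0 pX k xy :=
  mul_nonneg (Finset.prod_nonneg fun i _ => hp0 _) (hW0 _ _)

lemma sum_y_joint {K k : ℕ} (W : (Fin K → 𝓧) → 𝓨 → ℝ) (x0 : 𝓧) (pX : 𝓧 → ℝ)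
    (hW1 : ∀ x, ∑ y, W x y = 1) (x : Fin k → 𝓧) :
    ∑ y, joint W x0 pX k (x, y) = ∏ i, pX (x i) := by
  simp [joint, redW, ← Finset.mul_sum, hW1]

lemma margX_joint {K k : ℕ} [Nonempty 𝓧] (W : (Fin K → 𝓧) → 𝓨 → ℝ) (x0 : 𝓧) (pX : 𝓧 → ℝ)
    (hW1 : ∀ x, ∑ y, W x y = 1) (hp1 : ∑ a, pX a = 1) (S : Finset (Fin k)) (u : S → 𝓧) :
    margX (joint W x0 pX k) S u = ∏ i : S, pX (u i) := by
  classical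
  set v : Fin k → 𝓧 := fun i => if h : i ∈ S then u ⟨i, h⟩ else Classical.arbitrary 𝓧 with hv
  have hcond : ∀ x : Fin k → 𝓧, (∀ i : S, x i.1 = u i) ↔ (∀ i ∈ S, x i = v i) := by
    intro x
    constructor
    · intro h i hi; rw [hv]; simp only [hi, dif_pos]; exact h ⟨i, hi⟩
    · intro h i; have := h i.1 i.2; rw [hv] at this; simpa [i.2] using this
  have step1 : margX (joint W x0 pX k) S u
      = ∑ x : Fin k → 𝓧, (if ∀ i ∈ S, x i = v i then ∏ i, pX (x i) else 0) := by
    simp only [margX]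
    refine Finset.sum_congr rfl fun x _ => ?_
    by_cases hA : ∀ i : S, x i.1 = u i
    · rw [Finset.sum_congr rfl (fun y _ => if_pos hA), if_pos ((hcond x).mp hA)]
      exact sum_y_joint W x0 pX hW1 x
    · rw [Finset.sum_congr rfl (fun y _ => if_neg hA), if_neg (fun h => hA ((hcond x).mpr h))]
      simp
  rw [step1, sum_pi_ite pX hp1 S v, ← Finset.prod_coe_sort]
  refine Finset.prod_congr rfl fun i _ => ?_
  have : v i.1 = u i := by rw [hv]; simp [i.2]
  rw [this]
end Chunk3


section CMI
variable {U V W : Type*} [Fintype U] [Fintype V] [Fintype W]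


def qUW (q : U × V × W → ℝ) : U × W → ℝ := fun uw => ∑ v, q (uw.1, v, uw.2)
def qVW (q : U × V × W → ℝ) : V × W → ℝ := fun vw => ∑ u, q (u, vw.1, vw.2)
def qWm (q : U × V × W → ℝ) : W → ℝ := fun w => ∑ u, ∑ v, q (u, v, w)

/-- The pointwise "KL-divergence" summand. -/
def Fpt (q : U × V × W → ℝ) (p : U × V × W) : ℝ :=
  q p * Real.log (q p * qWm q p.2.2 / (qUW q (p.1, p.2.2) * qVW q (p.2.1, p.2.2)))
    + qUW q (p.1, p.2.2) * qVW q (p.2.1, p.2.2) / qWm q p.2.2 - q p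

section pointwise

variable (q : U × V × W → ℝ)

lemma le_qUW (h0 : ∀ z, 0 ≤ q z) (p : U × V × W) : q p ≤ qUW q (p.1, p.2.2) := by
  obtain ⟨u, v, w⟩ := p
  exact Finset.single_le_sum (fun v' _ => h0 (u, v', w)) (Finset.mem_univ v)

lemma le_qVW (h0 : ∀ z, 0 ≤ q z) (p : U × V × W) : q p ≤ qVW q (p.2.1, p.2.2) := by
  obtain ⟨u, v, w⟩ := p
  exact Finset.single_le_sum (fun u' _ => h0 (u', v, w)) (Finset.mem_univ u)

lemma qUW_nonneg (h0 : ∀ z, 0 ≤ q z) (uw : U × W) : 0 ≤ qUW q uw :=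
  Finset.sum_nonneg fun v _ => h0 _

lemma qVW_nonneg (h0 : ∀ z, 0 ≤ q z) (vw : V × W) : 0 ≤ qVW q vw :=
  Finset.sum_nonneg fun u _ => h0 _

lemma qWm_nonneg (h0 : ∀ z, 0 ≤ q z) (w : W) : 0 ≤ qWm q w :=
  Finset.sum_nonneg fun u _ => Finset.sum_nonneg fun v _ => h0 _

lemma qUW_le_qWm (h0 : ∀ z, 0 ≤ q z) (uw : U × W) : qUW q uw ≤ qWm q uw.2 :=
  Finset.single_le_sum (fun u' _ => qUW_nonneg q h0 (u', uw.2)) (Finset.mem_univ uw.1)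

lemma sum_qUW (w : W) : ∑ u, qUW q (u, w) = qWm q w := rfl

lemma sum_qVW (w : W) : ∑ v, qVW q (v, w) = qWm q w := by
  simp only [qVW, qWm]
  exact Finset.sum_comm

lemma Fpt_nonneg (h0 : ∀ z, 0 ≤ q z) (p : U × V × W) : 0 ≤ Fpt q p := by
  set A := q p with hA
  set a := qUW q (p.1, p.2.2) with ha
  set b := qVW q (p.2.1, p.2.2) with hb
  set t := qWm q p.2.2 with ht
  have hA0 : 0 ≤ A := h0 p
  have haA : A ≤ a := le_qUW q h0 p
  have hbA : A ≤ b := le_qVW q h0 p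
  have hta : a ≤ t := qUW_le_qWm q h0 (p.1, p.2.2)
  have ha0 : 0 ≤ a := le_trans hA0 haA
  have hb0 : 0 ≤ b := le_trans hA0 hbA
  have ht0 : 0 ≤ t := le_trans ha0 hta
  rcases eq_or_lt_of_le hA0 with hz | hApos
  · have : Fpt q p = a * b / t := by
      simp [Fpt, ← hA, ← hz, ← ha, ← hb, ← ht]
    rw [this]
    positivity
  · have hapos : 0 < a := lt_of_lt_of_le hApos haA
    have hbpos : 0 < b := lt_of_lt_of_le hApos hbA
    have htpos : 0 < t := lt_of_lt_of_le hapos hta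
    set s := a * b / t with hs
    have hspos : 0 < s := by positivity
    have hlog : A * t / (a * b) = A / s := by
      rw [hs]; field_simp
    have hF : Fpt q p = A * ((s / A - 1) - Real.log (s / A)) := by
      have hAs : Real.log (A * t / (a * b)) = - Real.log (s / A) := by
        rw [hlog, ← Real.log_inv]
        congr 1
        field_simp
      simp only [Fpt, ← hA, ← ha, ← hb, ← ht, ← hs, hAs]
      field_simp
      ring
    rw [hF]
    have := Real.log_le_sub_one_of_pos (by positivity : (0:ℝ) < s / A)
    nlinarith
end pointwise




variable (q : U × V × W → ℝ)

lemma negMulLog_sum {ι : Type*} [Fintype ι] (f : ι → ℝ) :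
    Real.negMulLog (∑ i, f i) = ∑ i, -(f i * Real.log (∑ j, f j)) := by
  rw [Real.negMulLog, neg_mul, Finset.sum_mul, ← Finset.sum_neg_distrib]

lemma negMulLog_sum2 {ι κ : Type*} [Fintype ι] [Fintype κ] (f : ι → κ → ℝ) :
    Real.negMulLog (∑ i, ∑ j, f i j)
      = ∑ i, ∑ j, -(f i j * Real.log (∑ i', ∑ j', f i' j')) := by
  rw [Real.negMulLog, neg_mul, Finset.sum_mul, ← Finset.sum_neg_distrib]
  refine Finset.sum_congr rfl fun i _ => ?_
  rw [Finset.sum_mul, ← Finset.sum_neg_distrib]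

lemma Fpt_eq_zero (h0 : ∀ z, 0 ≤ q z) (p : U × V × W) (hF : Fpt q p = 0) :
    q p * qWm q p.2.2 = qUW q (p.1, p.2.2) * qVW q (p.2.1, p.2.2) := by
  set A := q p with hA
  set a := qUW q (p.1, p.2.2) with ha
  set b := qVW q (p.2.1, p.2.2) with hb
  set t := qWm q p.2.2 with ht
  have hA0 : 0 ≤ A := h0 p
  have haA : A ≤ a := le_qUW q h0 p
  have hbA : A ≤ b := le_qVW q h0 p
  have hta : a ≤ t := qUW_le_qWm q h0 (p.1, p.2.2)
  have ha0 : 0 ≤ a := le_trans hA0 haA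
  have hb0 : 0 ≤ b := le_trans hA0 hbA
  have ht0 : 0 ≤ t := le_trans ha0 hta
  rcases eq_or_lt_of_le hA0 with hz | hApos
  · have hF' : a * b / t = 0 := by
      have : Fpt q p = a * b / t := by
        simp [Fpt, ← hA, ← hz, ← ha, ← hb, ← ht]
      rw [this] at hF; exact hF
    rcases eq_or_lt_of_le ht0 with htz | htpos
    · have : a = 0 := le_antisymm (htz ▸ hta) ha0
      rw [← hz, this]; ring
    · have : a * b = 0 := by
        rcases div_eq_zero_iff.mp hF' with h | h
        · exact h
        · exact absurd h (ne_of_gt htpos)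
      rw [← hz, this]; ring
  · have hapos : 0 < a := lt_of_lt_of_le hApos haA
    have hbpos : 0 < b := lt_of_lt_of_le hApos hbA
    have htpos : 0 < t := lt_of_lt_of_le hapos hta
    set s := a * b / t with hs
    have hspos : 0 < s := by positivity
    have hF2 : Fpt q p = A * ((s / A - 1) - Real.log (s / A)) := by
      have hlog : A * t / (a * b) = A / s := by rw [hs]; field_simp
      have hAs : Real.log (A * t / (a * b)) = - Real.log (s / A) := by
        rw [hlog, ← Real.log_inv]
        congr 1
        field_simp
      simp only [Fpt, ← hA, ← ha, ← hb, ← ht, ← hs, hAs]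
      field_simp
      ring
    rw [hF2] at hF
    have hx : s / A = 1 := by
      by_contra hne
      have := Real.log_lt_sub_one_of_pos (by positivity : (0:ℝ) < s / A) hne
      have h2 : 0 < A * ((s / A - 1) - Real.log (s / A)) := by nlinarith
      linarith [hF ▸ h2]
    have hsA : s = A := by
      field_simp at hx
      linarith
    have : a * b = A * t := by
      rw [← hsA, hs]; field_simp
    linarith [this]

lemma sum_rot {A B C : Type*} [Fintype A] [Fintype B] [Fintype C] (f : A → B → C → ℝ) :
    ∑ a, ∑ b, ∑ c, f a b c = ∑ c, ∑ a, ∑ b, f a b c := by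
  have h1 : ∀ a, ∑ b, ∑ c, f a b c = ∑ c, ∑ b, f a b c := fun _ => Finset.sum_comm
  rw [Finset.sum_congr rfl fun a _ => h1 a]
  exact Finset.sum_comm

lemma sum_sdiv (h0 : ∀ z, 0 ≤ q z) :
    ∑ u, ∑ v, ∑ w, qUW q (u, w) * qVW q (v, w) / qWm q w
      = ∑ u, ∑ v, ∑ w, q (u, v, w) := by
  have per_w : ∀ w, ∑ u, ∑ v, qUW q (u, w) * qVW q (v, w) / qWm q w = qWm q w := by
    intro w
    rcases eq_or_lt_of_le (qWm_nonneg q h0 w) with htz | htpos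
    · have hz : ∀ u, qUW q (u, w) = 0 := fun u =>
        le_antisymm (htz ▸ qUW_le_qWm q h0 (u, w)) (qUW_nonneg q h0 _)
      simp [hz, ← htz]
    · have step : ∀ u, ∑ v, qUW q (u, w) * qVW q (v, w) / qWm q w
          = qUW q (u, w) * (qWm q w / qWm q w) := by
        intro u
        simp only [mul_div_assoc]
        rw [← Finset.mul_sum, ← Finset.sum_div, sum_qVW]
      rw [Finset.sum_congr rfl fun u _ => step u, div_self (ne_of_gt htpos)]
      simp only [mul_one]
      exact sum_qUW q w
  rw [sum_rot, sum_rot (fun u v w => q (u, v, w))]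
  exact Finset.sum_congr rfl fun w _ => per_w w

lemma entropy_qUW_eq :
    entropy (qUW q) = ∑ u, ∑ v, ∑ w, -(q (u, v, w) * Real.log (qUW q (u, w))) := by
  rw [entropy, Fintype.sum_prod_type]
  refine Finset.sum_congr rfl fun u _ => ?_
  have h1 : ∀ w, Real.negMulLog (qUW q (u, w))
      = ∑ v, -(q (u, v, w) * Real.log (qUW q (u, w))) := fun w =>
    negMulLog_sum (fun v => q (u, v, w))
  rw [Finset.sum_congr rfl fun w _ => h1 w]
  exact Finset.sum_comm

lemma entropy_qVW_eq :
    entropy (qVW q) = ∑ u, ∑ v, ∑ w, -(q (u, v, w) * Real.log (qVW q (v, w))) := by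
  rw [entropy, Fintype.sum_prod_type]
  have h1 : ∀ v, ∑ w, Real.negMulLog (qVW q (v, w))
      = ∑ u, ∑ w, -(q (u, v, w) * Real.log (qVW q (v, w))) := by
    intro v
    have h2 : ∀ w, Real.negMulLog (qVW q (v, w))
        = ∑ u, -(q (u, v, w) * Real.log (qVW q (v, w))) := fun w =>
      negMulLog_sum (fun u => q (u, v, w))
    rw [Finset.sum_congr rfl fun w _ => h2 w]
    exact Finset.sum_comm
  rw [Finset.sum_congr rfl fun v _ => h1 v]
  exact Finset.sum_comm

lemma entropy_qWm_eq :
    entropy (qWm q) = ∑ u, ∑ v, ∑ w, -(q (u, v, w) * Real.log (qWm q w)) := by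
  rw [entropy]
  have h1 : ∀ w, Real.negMulLog (qWm q w)
      = ∑ u, ∑ v, -(q (u, v, w) * Real.log (qWm q w)) := fun w =>
    negMulLog_sum2 (fun u v => q (u, v, w))
  rw [Finset.sum_congr rfl fun w _ => h1 w]
  rw [← sum_rot (fun u v w => -(q (u, v, w) * Real.log (qWm q w)))]

lemma entropy_q_eq :
    entropy q = ∑ u, ∑ v, ∑ w, -(q (u, v, w) * Real.log (q (u, v, w))) := by
  rw [entropy, Fintype.sum_prod_type]
  refine Finset.sum_congr rfl fun u _ => ?_
  rw [Fintype.sum_prod_type]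
  refine Finset.sum_congr rfl fun v _ => Finset.sum_congr rfl fun w _ => ?_
  rw [Real.negMulLog, neg_mul]

lemma Fpt_decomp (h0 : ∀ z, 0 ≤ q z) (u : U) (v : V) (w : W) :
    Fpt q (u, v, w)
      = (q (u, v, w) * (Real.log (q (u, v, w)) + Real.log (qWm q w)
            - Real.log (qUW q (u, w)) - Real.log (qVW q (v, w))))
        + (qUW q (u, w) * qVW q (v, w) / qWm q w - q (u, v, w)) := by
  by_cases hA : q (u, v, w) = 0
  · simp [Fpt, hA]
  · have hApos : 0 < q (u, v, w) := lt_of_le_of_ne (h0 _) (Ne.symm hA)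
    have ha : 0 < qUW q (u, w) := lt_of_lt_of_le hApos (le_qUW q h0 (u, v, w))
    have hb : 0 < qVW q (v, w) := lt_of_lt_of_le hApos (le_qVW q h0 (u, v, w))
    have ht : 0 < qWm q w := lt_of_lt_of_le ha (qUW_le_qWm q h0 (u, w))
    have hlog : Real.log (q (u, v, w) * qWm q w / (qUW q (u, w) * qVW q (v, w)))
        = Real.log (q (u, v, w)) + Real.log (qWm q w)
            - Real.log (qUW q (u, w)) - Real.log (qVW q (v, w)) := by
      rw [Real.log_div (by positivity) (by positivity),
        Real.log_mul hA (ne_of_gt ht), Real.log_mul (ne_of_gt ha) (ne_of_gt hb)]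
      ring
    simp only [Fpt, hlog]
    ring

lemma sum_Fpt (h0 : ∀ z, 0 ≤ q z) :
    ∑ p, Fpt q p
      = entropy (qUW q) + entropy (qVW q) - entropy q - entropy (qWm q) := by
  have expand : ∑ p, Fpt q p = ∑ u, ∑ v, ∑ w, Fpt q (u, v, w) := by
    rw [Fintype.sum_prod_type]
    exact Finset.sum_congr rfl fun u _ => Fintype.sum_prod_type _
  rw [expand]
  rw [Finset.sum_congr rfl fun u _ => Finset.sum_congr rfl fun v _ =>
    Finset.sum_congr rfl fun w _ => Fpt_decomp q h0 u v w]
  have key : ∑ u, ∑ v, ∑ w,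
      ((q (u, v, w) * (Real.log (q (u, v, w)) + Real.log (qWm q w)
            - Real.log (qUW q (u, w)) - Real.log (qVW q (v, w))))
        + (qUW q (u, w) * qVW q (v, w) / qWm q w - q (u, v, w)))
      = (∑ u, ∑ v, ∑ w, q (u, v, w) * (Real.log (q (u, v, w)) + Real.log (qWm q w)
            - Real.log (qUW q (u, w)) - Real.log (qVW q (v, w))))
        + ((∑ u, ∑ v, ∑ w, qUW q (u, w) * qVW q (v, w) / qWm q w)
            - ∑ u, ∑ v, ∑ w, q (u, v, w)) := by
    simp only [Finset.sum_add_distrib, Finset.sum_sub_distrib]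
  rw [key, sum_sdiv q h0, sub_self, add_zero]
  rw [entropy_qUW_eq, entropy_qVW_eq, entropy_qWm_eq, entropy_q_eq]
  simp only [← Finset.sum_add_distrib, ← Finset.sum_sub_distrib]
  refine Finset.sum_congr rfl fun u _ => Finset.sum_congr rfl fun v _ =>
    Finset.sum_congr rfl fun w _ => ?_
  ring

lemma cmi_le (h0 : ∀ z, 0 ≤ q z) :
    entropy q + entropy (qWm q) ≤ entropy (qUW q) + entropy (qVW q) := by
  have h1 : 0 ≤ ∑ p, Fpt q p := Finset.sum_nonneg fun p _ => Fpt_nonneg q h0 p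
  rw [sum_Fpt q h0] at h1
  linarith

lemma cmi_eq (h0 : ∀ z, 0 ≤ q z)
    (heq : entropy q + entropy (qWm q) = entropy (qUW q) + entropy (qVW q)) :
    ∀ u v w, q (u, v, w) * qWm q w = qUW q (u, w) * qVW q (v, w) := by
  have h1 : ∑ p, Fpt q p = 0 := by rw [sum_Fpt q h0]; linarith
  have hall := (Finset.sum_eq_zero_iff_of_nonneg
    (fun p _ => Fpt_nonneg q h0 p)).mp h1
  intro u v w
  exact Fpt_eq_zero q h0 (u, v, w) (hall (u, v, w) (Finset.mem_univ _))


end CMI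


lemma rankone {ι 𝓧 : Type*} [Fintype ι] [Fintype 𝓧] (N : ι → 𝓧 → 𝓧 → ℝ) (pX : 𝓧 → ℝ)
    (hp0 : ∀ a, 0 ≤ pX a) (hp1 : ∑ a, pX a = 1)
    (hN0 : ∀ i a b, 0 ≤ N i a b)
    (hsym : ∀ i a b, N i a b = N i b a)
    (hfac : ∀ i a b, N i a b * (∑ a', ∑ b', N i a' b')
        = (∑ b', N i a b') * (∑ a', N i a' b))
    (hsum : ∀ a b, ∑ i, N i a b = pX a * pX b) :
    ∀ i a b, N i a b = (∑ a', ∑ b', N i a' b') * (pX a * pX b) := by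
  set r : ι → 𝓧 → ℝ := fun i a => ∑ b, N i a b with hr
  set t : ι → ℝ := fun i => ∑ a, r i a with ht
  have hr0 : ∀ i a, 0 ≤ r i a := fun i a => Finset.sum_nonneg fun b _ => hN0 i a b
  have ht0 : ∀ i, 0 ≤ t i := fun i => Finset.sum_nonneg fun a _ => hr0 i a
  have hrt : ∀ i a, r i a ≤ t i := fun i a =>
    Finset.single_le_sum (fun a' _ => hr0 i a') (Finset.mem_univ a)
  have hNr : ∀ i a b, N i a b ≤ r i a := fun i a b =>
    Finset.single_le_sum (fun b' _ => hN0 i a b') (Finset.mem_univ b)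
  have hcol : ∀ i b, ∑ a', N i a' b = r i b := by
    intro i b
    rw [hr]
    exact Finset.sum_congr rfl fun a' _ => hsym i a' b
  have htt : ∀ i, t i = ∑ a', ∑ b', N i a' b' := fun i => rfl
  have hfac' : ∀ i a b, N i a b = r i a * r i b / t i := by
    intro i a b
    by_cases htz : t i = 0
    · have hNz : N i a b = 0 :=
        le_antisymm (le_trans (hNr i a b) (le_trans (hrt i a) (le_of_eq htz))) (hN0 i a b)
      have hrz : r i a = 0 :=
        le_antisymm (le_trans (hrt i a) (le_of_eq htz)) (hr0 i a)
      rw [hNz, hrz]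
      simp
    · have h1 := hfac i a b
      rw [← htt i, hcol i b] at h1
      field_simp
      linarith [h1]
  have hsumr : ∀ a, ∑ i, r i a = pX a := by
    intro a
    rw [hr]
    rw [Finset.sum_comm]
    calc ∑ b, ∑ i, N i a b = ∑ b, pX a * pX b := Finset.sum_congr rfl fun b _ => hsum a b
      _ = pX a := by rw [← Finset.mul_sum, hp1, mul_one]
  obtain ⟨a0, hpa0⟩ : ∃ a0, 0 < pX a0 := by
    by_contra h
    push_neg at h
    have : ∑ a, pX a = 0 := le_antisymm (Finset.sum_nonpos fun a _ => h a)
      (Finset.sum_nonneg fun a _ => hp0 a)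
    rw [hp1] at this
    norm_num at this
  have key : ∀ i b, pX a0 * r i b = pX b * r i a0 := by
    have hterm : ∀ b i, (pX a0 * r i b - pX b * r i a0) ^ 2 / t i
        = pX a0 ^ 2 * N i b b - 2 * pX a0 * pX b * N i a0 b + pX b ^ 2 * N i a0 a0 := by
      intro b i
      by_cases htz : t i = 0
      · have hrz : ∀ c, r i c = 0 := fun c =>
          le_antisymm (le_trans (hrt i c) (le_of_eq htz)) (hr0 i c)
        have hNz : ∀ c d, N i c d = 0 := fun c d =>
          le_antisymm (le_trans (hNr i c d) (le_of_eq (hrz c))) (hN0 i c d)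
        rw [hrz, hrz, hNz, hNz, hNz]
        ring
      · rw [hfac' i b b, hfac' i a0 b, hfac' i a0 a0]
        field_simp
        ring
    have hzero : ∀ b, ∑ i, (pX a0 * r i b - pX b * r i a0) ^ 2 / t i = 0 := by
      intro b
      rw [Finset.sum_congr rfl fun i _ => hterm b i]
      simp only [Finset.sum_add_distrib, Finset.sum_sub_distrib, ← Finset.mul_sum]
      rw [hsum b b, hsum a0 b, hsum a0 a0]
      ring
    intro i b
    have hi := (Finset.sum_eq_zero_iff_of_nonneg
      (fun i _ => div_nonneg (sq_nonneg _) (ht0 i))).mp (hzero b) i (Finset.mem_univ i)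
    by_cases htz : t i = 0
    · have hrz : ∀ c, r i c = 0 := fun c =>
        le_antisymm (le_trans (hrt i c) (le_of_eq htz)) (hr0 i c)
      rw [hrz, hrz]
      ring
    · rcases div_eq_zero_iff.mp hi with h | h
      · have := (pow_eq_zero_iff (two_ne_zero)).mp h
        linarith
      · exact absurd h htz
  have hra0 : ∀ i, r i a0 = t i * pX a0 := by
    intro i
    have : ∑ b, pX a0 * r i b = ∑ b, pX b * r i a0 :=
      Finset.sum_congr rfl fun b _ => key i b
    rw [← Finset.mul_sum, ← Finset.sum_mul, hp1, one_mul] at this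
    have hL : ∑ b, r i b = t i := rfl
    rw [hL] at this
    linarith
  have hrall : ∀ i b, r i b = t i * pX b := by
    intro i b
    have hk := key i b
    rw [hra0 i] at hk
    have h2 : pX a0 * r i b = pX a0 * (t i * pX b) := by ring_nf; ring_nf at hk; linarith
    exact mul_left_cancel₀ (ne_of_gt hpa0) h2
  intro i a b
  rw [hfac' i a b, hrall i a, hrall i b, ← htt i]
  by_cases htz : t i = 0
  · rw [htz]
    simp
  · field_simp


section Marg56
variable {U V Z Y : Type*} [Fintype U] [Fintype V] [Fintype Z] [Fintype Y]

lemma marg5 (q : U × V × (Z × Y) → ℝ) (u : U) (y : Y) :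
    push q (fun p => (p.1, p.2.2.2)) (u, y) = ∑ v, ∑ z, q (u, v, (z, y)) := by
  simp only [push, Fintype.sum_prod_type, Prod.ext_iff]
  rw [Finset.sum_eq_single u]
  · refine Finset.sum_congr rfl fun v _ => Finset.sum_congr rfl fun z _ => ?_
    rw [Finset.sum_eq_single y] <;> simp_all
  · intro u' _ hu
    exact Finset.sum_eq_zero fun v _ => Finset.sum_eq_zero fun z _ =>
      Finset.sum_eq_zero fun y' _ => by simp [hu]
  · simp

lemma marg6 (q : U × V × (Z × Y) → ℝ) (y : Y) :
    push q (fun p => p.2.2.2) y = ∑ u, ∑ v, ∑ z, q (u, v, (z, y)) := by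
  simp only [push, Fintype.sum_prod_type]
  refine Finset.sum_congr rfl fun u _ => Finset.sum_congr rfl fun v _ =>
    Finset.sum_congr rfl fun z _ => ?_
  rw [Finset.sum_eq_single y] <;> simp_all

end Marg56

section Geometry
variable {𝓧 𝓨 : Type*} [Fintype 𝓧] [Fintype 𝓨]

lemma mem_idx {k n : ℕ} (i : Fin k) : i ∈ idx k n ↔ (i : ℕ) < n := by simp [idx]

lemma union_idx {k n : ℕ} (hn : n < k) :
    ({(⟨n, hn⟩ : Fin k)} : Finset (Fin k)) ∪ idx k n = idx k (n + 1) := by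
  ext i
  simp only [Finset.mem_union, Finset.mem_singleton, mem_idx, Fin.ext_iff]
  omega

lemma idxR_single {k n : ℕ} (hn : n + 1 < k) :
    idxR k (n + 1) (n + 2) = {(⟨n + 1, hn⟩ : Fin k)} := by
  ext i
  simp only [idxR, Finset.mem_filter, Finset.mem_univ, true_and, Finset.mem_singleton,
    Fin.ext_iff]
  omega

/-- Splitting off the top coordinate of `idx k (n+1)`. -/
def eStep {k : ℕ} (n : ℕ) (hn : n < k) : (↥(idx k (n + 1)) → 𝓧) ≃ 𝓧 × (↥(idx k n) → 𝓧) where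
  toFun u := (u ⟨⟨n, hn⟩, (mem_idx _).mpr (Nat.lt_succ_self n)⟩,
    fun i => u ⟨i.1, (mem_idx _).mpr (Nat.lt_succ_of_lt ((mem_idx _).mp i.2))⟩)
  invFun az i := if h : (i.1 : ℕ) < n then az.2 ⟨i.1, (mem_idx _).mpr h⟩ else az.1
  left_inv u := by
    funext i
    dsimp only
    by_cases h : ((i.1 : Fin k) : ℕ) < n
    · rw [dif_pos h]
    · rw [dif_neg h]
      have hi : ((i.1 : Fin k) : ℕ) < n + 1 := (mem_idx _).mp i.2
      have hieq : ((i.1 : Fin k) : ℕ) = n := by omega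
      have : (⟨⟨n, hn⟩, (mem_idx _).mpr (Nat.lt_succ_self n)⟩ : ↥(idx k (n + 1))) = i :=
        Subtype.ext (Fin.ext hieq.symm)
      rw [this]
  right_inv az := by
    obtain ⟨a, z⟩ := az
    refine Prod.ext ?_ ?_
    · show (if h : ((⟨n, hn⟩ : Fin k) : ℕ) < n then _ else a) = a
      rw [dif_neg (by simp)]
    · funext i
      show (if h : ((i.1 : Fin k) : ℕ) < n then z ⟨i.1, _⟩ else a) = z i
      rw [dif_pos ((mem_idx _).mp i.2)]

/-- Functions on a singleton index set. -/
def eSing {k : ℕ} (c : Fin k) : (↥({c} : Finset (Fin k)) → 𝓧) ≃ 𝓧 where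
  toFun u := u ⟨c, Finset.mem_singleton_self c⟩
  invFun a := fun _ => a
  left_inv u := by
    funext i
    have : (⟨c, Finset.mem_singleton_self c⟩ : ↥({c} : Finset (Fin k))) = i :=
      Subtype.ext (Finset.mem_singleton.mp i.2).symm
    dsimp only
    rw [this]
  right_inv a := rfl

/-- Functions on a two-element index set. -/
def ePair {k : ℕ} (c d : Fin k) (hne : c ≠ d) :
    (↥({c, d} : Finset (Fin k)) → 𝓧) ≃ 𝓧 × 𝓧 where
  toFun u := (u ⟨c, Finset.mem_insert_self _ _⟩,
    u ⟨d, Finset.mem_insert.mpr (Or.inr (Finset.mem_singleton_self _))⟩)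
  invFun ab i := if (i.1 : Fin k) = c then ab.1 else ab.2
  left_inv u := by
    funext i
    dsimp only
    rcases Finset.mem_insert.mp i.2 with h | h
    · rw [if_pos h]
      congr 1
      exact Subtype.ext h.symm
    · have h' := Finset.mem_singleton.mp h
      rw [if_neg (fun hh => hne.symm (h' ▸ hh))]
      congr 1
      exact Subtype.ext h'.symm
  right_inv ab := by
    refine Prod.ext ?_ ?_
    · dsimp only
      rw [if_pos rfl]
    · dsimp only
      rw [if_neg (Ne.symm hne)]

/-- Swapping two input coordinates, as an equivalence of the sample space. -/
def swapT {k : ℕ} (c d : Fin k) : ((Fin k → 𝓧) × 𝓨) ≃ ((Fin k → 𝓧) × 𝓨) where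
  toFun xy := (xy.1 ∘ Equiv.swap c d, xy.2)
  invFun xy := (xy.1 ∘ Equiv.swap c d, xy.2)
  left_inv xy := by
    refine Prod.ext ?_ rfl
    funext i
    simp [Function.comp, Equiv.swap_apply_self]
  right_inv xy := by
    refine Prod.ext ?_ rfl
    funext i
    simp [Function.comp, Equiv.swap_apply_self]

/-- Swap of first (u,v)-coordinates of the triple space. -/
def swapE (U W : Type*) : (U × U × W) ≃ (U × U × W) where
  toFun p := (p.2.1, p.1, p.2.2)
  invFun p := (p.2.1, p.1, p.2.2)
  left_inv p := rfl
  right_inv p := rfl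

lemma joint_comp_swap {K k : ℕ} (W : (Fin K → 𝓧) → 𝓨 → ℝ) (x0 : 𝓧) (pX : 𝓧 → ℝ)
    (hperm : ∀ (σ : Equiv.Perm (Fin K)) (x : Fin K → 𝓧) (y : 𝓨), W (x ∘ σ) y = W x y)
    (hkK : k ≤ K) (n : ℕ) (hn : n + 1 < k) (xy : (Fin k → 𝓧) × 𝓨) :
    joint W x0 pX k (swapT (⟨n, by omega⟩ : Fin k) ⟨n + 1, hn⟩ xy) = joint W x0 pX k xy := by
  obtain ⟨x, y⟩ := xy
  have hnK : n < K := by omega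
  have hn1K : n + 1 < K := by omega
  show joint W x0 pX k (x ∘ Equiv.swap (⟨n, by omega⟩ : Fin k) ⟨n + 1, hn⟩, y)
      = joint W x0 pX k (x, y)
  unfold joint
  have h1 : ∏ i, pX ((x ∘ Equiv.swap (⟨n, by omega⟩ : Fin k) ⟨n + 1, hn⟩) i)
      = ∏ i, pX (x i) :=
    Equiv.prod_comp (Equiv.swap (⟨n, by omega⟩ : Fin k) ⟨n + 1, hn⟩) fun i => pX (x i)
  rw [h1]
  congr 1
  unfold redW
  rw [← hperm (Equiv.swap (⟨n, hnK⟩ : Fin K) ⟨n + 1, hn1K⟩)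
    (fun i => if h : (i : ℕ) < k then x ⟨i, h⟩ else x0) y]
  congr 1
  funext i
  simp only [Function.comp]
  by_cases h1i : (i : ℕ) = n
  · have hiK : i = (⟨n, hnK⟩ : Fin K) := Fin.ext h1i
    have hs : Equiv.swap (⟨n, hnK⟩ : Fin K) ⟨n + 1, hn1K⟩ i = (⟨n + 1, hn1K⟩ : Fin K) := by
      rw [hiK]; exact Equiv.swap_apply_left _ _
    have hik : (i : ℕ) < k := by omega
    have hsk : ((⟨n + 1, hn1K⟩ : Fin K) : ℕ) < k := by show n + 1 < k; omega
    rw [hs, dif_pos hik, dif_pos hsk]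
    refine congrArg x ?_
    have h2 : (⟨(i : ℕ), hik⟩ : Fin k) = ⟨n, by omega⟩ := Fin.ext h1i
    rw [h2, Equiv.swap_apply_left]
  · by_cases h2i : (i : ℕ) = n + 1
    · have hiK : i = (⟨n + 1, hn1K⟩ : Fin K) := Fin.ext h2i
      have hs : Equiv.swap (⟨n, hnK⟩ : Fin K) ⟨n + 1, hn1K⟩ i = (⟨n, hnK⟩ : Fin K) := by
        rw [hiK]; exact Equiv.swap_apply_right _ _
      have hik : (i : ℕ) < k := by omega
      have hsk : ((⟨n, hnK⟩ : Fin K) : ℕ) < k := by show n < k; omega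
      rw [hs, dif_pos hik, dif_pos hsk]
      refine congrArg x ?_
      have h2 : (⟨(i : ℕ), hik⟩ : Fin k) = ⟨n + 1, hn⟩ := Fin.ext h2i
      rw [h2, Equiv.swap_apply_right]
    · have hs : Equiv.swap (⟨n, hnK⟩ : Fin K) ⟨n + 1, hn1K⟩ i = i :=
        Equiv.swap_apply_of_ne_of_ne
          (fun h => h1i (by rw [h]))
          (fun h => h2i (by rw [h]))
      rw [hs]
      by_cases hik : (i : ℕ) < k
      · rw [dif_pos hik, dif_pos hik]
        refine congrArg x ?_
        exact Equiv.swap_apply_of_ne_of_ne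
          (fun h => h1i (by simpa [Fin.ext_iff] using h))
          (fun h => h2i (by simpa [Fin.ext_iff] using h))
      · rw [dif_neg hik, dif_neg hik]

end Geometry

lemma sum_congr_univ {α : Type*} [Fintype α] {f g : α → ℝ} (h : ∀ a, f a = g a) :
    ∑ a, f a = ∑ a, g a :=
  Finset.sum_congr rfl fun a _ => h a

section Key
variable {𝓧 𝓨 : Type*} [Fintype 𝓧] [Fintype 𝓨] [Nonempty 𝓧] [Nonempty 𝓨]

lemma key {K k : ℕ} (W : (Fin K → 𝓧) → 𝓨 → ℝ) (x0 : 𝓧) (pX : 𝓧 → ℝ)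
    (hkK : k ≤ K)
    (hW0 : ∀ x y, 0 ≤ W x y) (hW1 : ∀ x, ∑ y, W x y = 1)
    (hp0 : ∀ a, 0 ≤ pX a) (hp1 : ∑ a, pX a = 1)
    (hperm : ∀ (σ : Equiv.Perm (Fin K)) (x : Fin K → 𝓧) (y : 𝓨), W (x ∘ σ) y = W x y)
    (n : ℕ) (hn : n + 2 ≤ k) :
    entropy (margXY (joint W x0 pX k) (idx k (n + 2)))
        + entropy (margXY (joint W x0 pX k) (idx k n))
      ≤ entropy (margXY (joint W x0 pX k) (idx k (n + 1)))
        + entropy (margXY (joint W x0 pX k) (idx k (n + 1)))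
    ∧ (entropy (margXY (joint W x0 pX k) (idx k (n + 2)))
          + entropy (margXY (joint W x0 pX k) (idx k n))
        = entropy (margXY (joint W x0 pX k) (idx k (n + 1)))
          + entropy (margXY (joint W x0 pX k) (idx k (n + 1))) →
      ∀ (y : 𝓨) (x : Fin k → 𝓧),
        margXY (joint W x0 pX k) (idx k (n + 2)) ⟨fun i => x i.1, y⟩ * outP W x0 pX k y
          = margXY (joint W x0 pX k) (idx k (n + 1)) ⟨fun i => x i.1, y⟩
            * margXY (joint W x0 pX k) (idxR k (n + 1) (n + 2)) ⟨fun i => x i.1, y⟩) := by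
  have hnk : n < k := by omega
  have hn1k : n + 1 < k := by omega
  set c1 : Fin k := ⟨n, hnk⟩ with hc1
  set c2 : Fin k := ⟨n + 1, hn1k⟩ with hc2
  set P : (Fin k → 𝓧) × 𝓨 → ℝ := joint W x0 pX k with hP
  have hP0 : ∀ xy, 0 ≤ P xy := joint_nonneg W x0 pX hW0 hp0
  set A2 : (Fin k → 𝓧) × 𝓨 → 𝓧 × 𝓧 × ((↥(idx k n) → 𝓧) × 𝓨) :=
    fun xy => (xy.1 c2, xy.1 c1, ((fun i => xy.1 i.1), xy.2)) with hA2
  set q : 𝓧 × 𝓧 × ((↥(idx k n) → 𝓧) × 𝓨) → ℝ := push P A2 with hq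
  have hq0 : ∀ z, 0 ≤ q z := fun z => push_nonneg hP0 A2 z
  set e1p : ((↥(idx k (n + 1)) → 𝓧) × 𝓨) ≃ 𝓧 × ((↥(idx k n) → 𝓧) × 𝓨) :=
    (Equiv.prodCongr (eStep n hnk) (Equiv.refl 𝓨)).trans
      (Equiv.prodAssoc 𝓧 (↥(idx k n) → 𝓧) 𝓨) with he1p
  set e2p : ((↥(idx k (n + 2)) → 𝓧) × 𝓨) ≃ 𝓧 × 𝓧 × ((↥(idx k n) → 𝓧) × 𝓨) :=
    (Equiv.prodCongr (eStep (n + 1) hn1k) (Equiv.refl 𝓨)).trans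
      ((Equiv.prodAssoc 𝓧 (↥(idx k (n + 1)) → 𝓧) 𝓨).trans
        (Equiv.prodCongr (Equiv.refl 𝓧) e1p)) with he2p
  -- the three restriction maps
  set R2 : (Fin k → 𝓧) × 𝓨 → (↥(idx k (n + 2)) → 𝓧) × 𝓨 :=
    fun xy => ((fun i => xy.1 i.1), xy.2) with hR2
  set R1 : (Fin k → 𝓧) × 𝓨 → (↥(idx k (n + 1)) → 𝓧) × 𝓨 :=
    fun xy => ((fun i => xy.1 i.1), xy.2) with hR1
  set R0 : (Fin k → 𝓧) × 𝓨 → (↥(idx k n) → 𝓧) × 𝓨 :=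
    fun xy => ((fun i => xy.1 i.1), xy.2) with hR0
  set map1 : (Fin k → 𝓧) × 𝓨 → 𝓧 × ((↥(idx k n) → 𝓧) × 𝓨) :=
    fun xy => (xy.1 c1, ((fun i => xy.1 i.1), xy.2)) with hmap1
  set map2 : (Fin k → 𝓧) × 𝓨 → 𝓧 × ((↥(idx k n) → 𝓧) × 𝓨) :=
    fun xy => (xy.1 c2, ((fun i => xy.1 i.1), xy.2)) with hmap2
  -- structural identities
  have k1 : (fun xy => e2p (R2 xy)) = A2 := rfl
  have k2 : (fun xy => e1p (R1 xy)) = map1 := rfl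
  -- swap invariance of P
  have hswapP : ∀ xy, P (swapT c1 c2 xy) = P xy := fun xy =>
    joint_comp_swap W x0 pX hperm hkK n hn1k xy
  -- swap moves map2 to map1
  have hswapmap : (fun xy => map1 (swapT c1 c2 xy)) = map2 := by
    funext xy
    obtain ⟨x, y⟩ := xy
    refine Prod.ext ?_ (Prod.ext ?_ rfl)
    · exact congrArg x (Equiv.swap_apply_left c1 c2)
    · funext i
      refine congrArg x (Equiv.swap_apply_of_ne_of_ne ?_ ?_)
      · have hi := (mem_idx i.1).mp i.2
        exact fun h => by rw [h, hc1] at hi; simp only [Fin.val_mk] at hi; omega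
      · have hi := (mem_idx i.1).mp i.2
        exact fun h => by rw [h, hc2] at hi; simp only [Fin.val_mk] at hi; omega
  -- swap symmetrizes A2
  have hswapA2 : (fun xy => A2 (swapT c1 c2 xy))
      = (fun xy => swapE 𝓧 ((↥(idx k n) → 𝓧) × 𝓨) (A2 xy)) := by
    funext xy
    obtain ⟨x, y⟩ := xy
    refine Prod.ext ?_ (Prod.ext ?_ (Prod.ext ?_ rfl))
    · exact congrArg x (Equiv.swap_apply_right c1 c2)
    · exact congrArg x (Equiv.swap_apply_left c1 c2)
    · funext i
      refine congrArg x (Equiv.swap_apply_of_ne_of_ne ?_ ?_)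
      · have hi := (mem_idx i.1).mp i.2
        exact fun h => by rw [h, hc1] at hi; simp only [Fin.val_mk] at hi; omega
      · have hi := (mem_idx i.1).mp i.2
        exact fun h => by rw [h, hc2] at hi; simp only [Fin.val_mk] at hi; omega
  -- identification of marginals of q with pushforwards of P
  have hqW : qWm q = push P R0 := by
    funext w
    rw [show qWm q w = push q (fun p => p.2.2) w from (marg3 q w).symm, push_push]
    rfl
  have hqVW : qVW q = push P map1 := by
    funext vw
    obtain ⟨v, w⟩ := vw
    rw [show qVW q (v, w) = push q (fun p => (p.2.1, p.2.2)) (v, w) from (marg2 q v w).symm,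
      push_push]
    rfl
  have hqUW : qUW q = push P map2 := by
    funext uw
    obtain ⟨u, w⟩ := uw
    rw [show qUW q (u, w) = push q (fun p => (p.1, p.2.2)) (u, w) from (marg1 q u w).symm,
      push_push]
    rfl
  have hUV : qUW q = qVW q := by
    rw [hqUW, hqVW, ← hswapmap]
    exact push_precomp_invariant P map1 (swapT c1 c2) hswapP
  -- pointwise symmetry of q
  have hqsym : ∀ u v w, q (u, v, w) = q (v, u, w) := by
    have h1 : push P (fun xy => A2 (swapT c1 c2 xy)) = q :=
      push_precomp_invariant P A2 (swapT c1 c2) hswapP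
    rw [hswapA2] at h1
    rw [push_comp_equiv P A2 (swapE 𝓧 ((↥(idx k n) → 𝓧) × 𝓨))] at h1
    intro u v w
    exact congrFun h1 (v, u, w)
  -- entropies transported
  have hEq2 : entropy q = entropy (margXY P (idx k (n + 2))) := by
    rw [margXY_eq_push, hq, ← k1]
    exact entropy_push_comp_equiv P R2 e2p
  have hEqV : entropy (qVW q) = entropy (margXY P (idx k (n + 1))) := by
    rw [margXY_eq_push, hqVW, ← k2]
    exact entropy_push_comp_equiv P R1 e1p
  have hEqU : entropy (qUW q) = entropy (margXY P (idx k (n + 1))) := by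
    rw [hUV]; exact hEqV
  have hEqW : entropy (qWm q) = entropy (margXY P (idx k n)) := by
    rw [margXY_eq_push, hqW]
  -- part 1
  have hineq := cmi_le q hq0
  constructor
  · rw [hEq2, hEqV, hEqU, hEqW] at hineq
    linarith
  -- part 2 : the equality case
  intro heq y x
  have heq' : entropy q + entropy (qWm q) = entropy (qUW q) + entropy (qVW q) := by
    rw [hEq2, hEqV, hEqU, hEqW]
    linarith
  have hfact := cmi_eq q hq0 heq'
  -- pair marginal of q is the iid product
  have hnepair : c2 ≠ c1 := by rw [hc1, hc2]; simp [Fin.ext_iff]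
  have hpair : ∀ u v, ∑ w, q (u, v, w) = pX u * pX v := by
    intro u v
    rw [show ∑ w, q (u, v, w) = push q (fun p => (p.1, p.2.1)) (u, v) from (marg4 q u v).symm,
      push_push]
    have hcomp2 : ((fun p : 𝓧 × 𝓧 × ((↥(idx k n) → 𝓧) × 𝓨) => (p.1, p.2.1)) ∘ A2)
        = fun xy => ePair c2 c1 hnepair
            ((fun xy : (Fin k → 𝓧) × 𝓨 =>
              (fun i : ↥({c2, c1} : Finset (Fin k)) => xy.1 i.1)) xy) := rfl
    rw [hcomp2, push_comp_equiv P _ (ePair c2 c1 hnepair)]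
    dsimp only
    rw [← margX_eq_push, margX_joint W x0 pX hW1 hp1]
    have hterm : ∀ i : ↥({c2, c1} : Finset (Fin k)),
        pX (((ePair c2 c1 hnepair).symm (u, v)) i)
          = (fun j : Fin k => pX (if j = c2 then u else v)) i.1 := fun i => rfl
    rw [Finset.prod_congr rfl fun i _ => hterm i]
    rw [Finset.prod_coe_sort ({c2, c1} : Finset (Fin k))
      (fun j : Fin k => pX (if j = c2 then u else v))]
    rw [Finset.prod_pair hnepair]
    rw [if_pos rfl, if_neg (Ne.symm hnepair)]
  -- rank-one structure
  have hconc : ∀ u v w, q (u, v, w) = qWm q w * (pX u * pX v) := by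
    have hr := rankone (fun w u v => q (u, v, w)) pX hp0 hp1
      (fun w u v => hq0 (u, v, w))
      (fun w u v => hqsym u v w)
      (fun w u v => hfact u v w)
      (fun u v => hpair u v)
    intro u v w
    exact hr w u v
  -- value computations
  set w0 : (↥(idx k n) → 𝓧) × 𝓨 := ((fun i => x i.1), y) with hw0
  have hval2 : margXY P (idx k (n + 2)) ⟨fun i => x i.1, y⟩ = q (x c2, x c1, w0) := by
    rw [margXY_eq_push]
    have h1 : push P R2 (⟨fun i => x i.1, y⟩ : (↥(idx k (n + 2)) → 𝓧) × 𝓨)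
        = push P (fun xy => e2p (R2 xy)) (e2p ⟨fun i => x i.1, y⟩) := by
      rw [push_comp_equiv P R2 e2p]
      dsimp only
      rw [Equiv.symm_apply_apply]
    rw [h1, k1]
    rfl
  have hval1 : margXY P (idx k (n + 1)) ⟨fun i => x i.1, y⟩ = qVW q (x c1, w0) := by
    rw [margXY_eq_push]
    have h1 : push P R1 (⟨fun i => x i.1, y⟩ : (↥(idx k (n + 1)) → 𝓧) × 𝓨)
        = push P (fun xy => e1p (R1 xy)) (e1p ⟨fun i => x i.1, y⟩) := by
      rw [push_comp_equiv P R1 e1p]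
      dsimp only
      rw [Equiv.symm_apply_apply]
    rw [h1, k2, hqVW]
    rfl
  have hvalS : margXY P (idxR k (n + 1) (n + 2)) ⟨fun i => x i.1, y⟩
      = ∑ v, ∑ z, q (x c2, v, (z, y)) := by
    rw [idxR_single hn1k, margXY_eq_push]
    set RS : (Fin k → 𝓧) × 𝓨 → (↥({c2} : Finset (Fin k)) → 𝓧) × 𝓨 :=
      fun xy => ((fun i => xy.1 i.1), xy.2) with hRS
    set eS : ((↥({c2} : Finset (Fin k)) → 𝓧) × 𝓨) ≃ 𝓧 × 𝓨 :=
      Equiv.prodCongr (eSing c2) (Equiv.refl 𝓨) with heS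
    have h1 : push P RS (⟨fun i => x i.1, y⟩ : (↥({c2} : Finset (Fin k)) → 𝓧) × 𝓨)
        = push P (fun xy => eS (RS xy)) (eS ⟨fun i => x i.1, y⟩) := by
      rw [push_comp_equiv P RS eS]
      dsimp only
      rw [Equiv.symm_apply_apply]
    rw [h1]
    have h2 : (fun xy => eS (RS xy)) = fun xy : (Fin k → 𝓧) × 𝓨 => (xy.1 c2, xy.2) := rfl
    rw [h2]
    have h3 : (fun xy : (Fin k → 𝓧) × 𝓨 => (xy.1 c2, xy.2))
        = (fun p : 𝓧 × 𝓧 × ((↥(idx k n) → 𝓧) × 𝓨) => (p.1, p.2.2.2)) ∘ A2 := rfl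
    rw [h3, ← push_push]
    rw [show eS (⟨fun i => x i.1, y⟩ : (↥({c2} : Finset (Fin k)) → 𝓧) × 𝓨) = (x c2, y) from rfl]
    rw [← hq]
    exact marg5 q (x c2) y
  have hout : outP W x0 pX k y = ∑ u, ∑ v, ∑ z, q (u, v, (z, y)) := by
    rw [outP_eq_push]
    have h1 : (Prod.snd : (Fin k → 𝓧) × 𝓨 → 𝓨)
        = (fun p : 𝓧 × 𝓧 × ((↥(idx k n) → 𝓧) × 𝓨) => p.2.2.2) ∘ A2 := rfl
    rw [h1, ← push_push, ← hq]
    exact marg6 q y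
  -- use the factorization
  set T : ℝ := ∑ z, qWm q (z, y) with hT
  have hsum_uv : ∀ u v, ∑ z, q (u, v, (z, y)) = pX u * pX v * T := by
    intro u v
    rw [sum_congr_univ fun z => hconc u v (z, y), hT, Finset.mul_sum]
    exact sum_congr_univ fun z => by ring
  have houtT : outP W x0 pX k y = T := by
    rw [hout]
    rw [sum_congr_univ fun u => sum_congr_univ fun v => hsum_uv u v]
    have h2 : ∀ u, ∑ v, pX u * pX v * T = pX u * T := by
      intro u
      rw [sum_congr_univ fun v => (by ring : pX u * pX v * T = pX v * (pX u * T)),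
        ← Finset.sum_mul, hp1, one_mul]
    rw [sum_congr_univ fun u => h2 u, ← Finset.sum_mul, hp1, one_mul]
  have hvalS' : margXY P (idxR k (n + 1) (n + 2)) ⟨fun i => x i.1, y⟩ = pX (x c2) * T := by
    rw [hvalS]
    rw [sum_congr_univ fun v => hsum_uv (x c2) v]
    rw [sum_congr_univ fun v => (by ring : pX (x c2) * pX v * T = pX v * (pX (x c2) * T)),
      ← Finset.sum_mul, hp1, one_mul]
  have hval1' : margXY P (idx k (n + 1)) ⟨fun i => x i.1, y⟩ = qWm q w0 * pX (x c1) := by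
    rw [hval1]
    rw [show qVW q (x c1, w0) = ∑ u, q (u, x c1, w0) from rfl]
    rw [sum_congr_univ fun u => hconc u (x c1) w0]
    rw [sum_congr_univ fun u => (by ring : qWm q w0 * (pX u * pX (x c1)) = pX u * (qWm q w0 * pX (x c1))),
      ← Finset.sum_mul, hp1, one_mul]
  have hval2' : margXY P (idx k (n + 2)) ⟨fun i => x i.1, y⟩
      = qWm q w0 * (pX (x c2) * pX (x c1)) := hval2.trans (hconc _ _ _)
  rw [hval2', houtT, hval1', hvalS']
  ring
lemma margX_entropy_step {K k : ℕ} (W : (Fin K → 𝓧) → 𝓨 → ℝ) (x0 : 𝓧) (pX : 𝓧 → ℝ)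
    (hW1 : ∀ x, ∑ y, W x y = 1) (hp1 : ∑ a, pX a = 1) {m : ℕ} (hm : m < k) :
    entropy (margX (joint W x0 pX k) (idx k (m + 1)))
      = entropy pX + entropy (margX (joint W x0 pX k) (idx k m)) := by
  have hPX : ∀ (S : Finset (Fin k)), margX (joint W x0 pX k) S
      = fun u : ↥S → 𝓧 => ∏ i, pX (u i) :=
    fun S => funext (margX_joint W x0 pX hW1 hp1 S)
  rw [hPX, hPX]
  have hsplit : (fun u : ↥(idx k (m + 1)) → 𝓧 => ∏ i, pX (u i))
      = fun u => (fun p : 𝓧 × (↥(idx k m) → 𝓧) => pX p.1 * ∏ i, pX (p.2 i))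
          ((eStep m hm) u) := by
    funext u
    set vf : Fin k → 𝓧 := fun i2 =>
      if h : i2 ∈ idx k (m + 1) then u ⟨i2, h⟩ else Classical.arbitrary 𝓧 with hvf
    have h1 : ∏ i : ↥(idx k (m + 1)), pX (u i) = ∏ i2 ∈ idx k (m + 1), pX (vf i2) := by
      rw [← Finset.prod_coe_sort (idx k (m + 1)) (fun i2 => pX (vf i2))]
      refine Finset.prod_congr rfl fun i _ => congrArg pX ?_
      rw [hvf]
      dsimp only
      rw [dif_pos i.2]
    have hins : idx k (m + 1) = insert (⟨m, hm⟩ : Fin k) (idx k m) := by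
      ext i2
      simp only [mem_idx, Finset.mem_insert, Fin.ext_iff]
      omega
    have hnotmem : (⟨m, hm⟩ : Fin k) ∉ idx k m := by simp [mem_idx]
    have h2 : (∏ i2 ∈ idx k (m + 1), pX (vf i2))
        = ∏ i2 ∈ insert (⟨m, hm⟩ : Fin k) (idx k m), pX (vf i2) :=
      Finset.prod_congr hins fun _ _ => rfl
    rw [h1, h2, Finset.prod_insert hnotmem]
    show pX (vf ⟨m, hm⟩) * ∏ i2 ∈ idx k m, pX (vf i2)
      = pX (u ⟨⟨m, hm⟩, (mem_idx _).mpr (Nat.lt_succ_self m)⟩)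
        * ∏ i : ↥(idx k m), pX (u ⟨i.1, (mem_idx _).mpr (Nat.lt_succ_of_lt ((mem_idx _).mp i.2))⟩)
    congr 1
    · refine congrArg pX ?_
      rw [hvf]
      dsimp only
      rw [dif_pos ((mem_idx _).mpr (Nat.lt_succ_self m))]
    · rw [← Finset.prod_coe_sort (idx k m) (fun i2 => pX (vf i2))]
      refine Finset.prod_congr rfl fun i _ => congrArg pX ?_
      rw [hvf]
      dsimp only
      rw [dif_pos ((mem_idx _).mpr (Nat.lt_succ_of_lt ((mem_idx _).mp i.2)))]
  rw [hsplit]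
  rw [entropy_comp_equiv (eStep m hm)
    (fun p : 𝓧 × (↥(idx k m) → 𝓧) => pX p.1 * ∏ i, pX (p.2 i))]
  rw [entropy_prod pX (fun z : ↥(idx k m) → 𝓧 => ∏ i, pX (z i)), hp1]
  have hZ : ∑ z : ↥(idx k m) → 𝓧, ∏ i, pX (z i) = 1 := by
    rw [← Fintype.prod_sum (fun (_ : ↥(idx k m)) (c : 𝓧) => pX c)]
    simp [hp1]
  rw [hZ, one_mul, one_mul]

end Key


end RACAux

open RAC

/-- Under permutation-invariance and interference, `I(X_i; Y_k | X_{[i−1]})`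
is strictly increasing in `i`: for `1 ≤ i < j ≤ k ≤ K`,
`I(X_i; Y_k | X_{[i−1]}) < I(X_j; Y_k | X_{[j−1]})`. -/
theorem chain_rule_terms_strictly_increasing
    {𝓧 𝓨 : Type*} [Fintype 𝓧] [Fintype 𝓨] [Nonempty 𝓧] [Nonempty 𝓨]
    (K : ℕ) (hK : 1 ≤ K)
    (W : (Fin K → 𝓧) → 𝓨 → ℝ) (x0 : 𝓧) (pX : 𝓧 → ℝ)
    (hW0 : ∀ x y, 0 ≤ W x y) (hW1 : ∀ x, ∑ y, W x y = 1)
    (hp0 : ∀ a, 0 ≤ pX a) (hp1 : ∑ a, pX a = 1)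
    (hperm : ∀ (σ : Equiv.Perm (Fin K)) (x : Fin K → 𝓧) (y : 𝓨), W (x ∘ σ) y = W x y)
    (hinter : ∀ k : ℕ, k ≤ K → ∀ s t : ℕ, 1 ≤ s → s < t → t ≤ k →
      ∃ y : 𝓨, 0 < outP W x0 pX k y ∧
        ∃ x : Fin k → 𝓧,
          margXY (joint W x0 pX k) (idx k t) ⟨fun i => x i.1, y⟩ / outP W x0 pX k y
            ≠ (margXY (joint W x0 pX k) (idx k s) ⟨fun i => x i.1, y⟩ / outP W x0 pX k y)
              * (margXY (joint W x0 pX k) (idxR k s t) ⟨fun i => x i.1, y⟩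
                  / outP W x0 pX k y)) :
    ∀ i j k : ℕ, (hi : 1 ≤ i) → (hij : i < j) → (hjk : j ≤ k) → (hkK : k ≤ K) →
      condMI (joint W x0 pX k) {(⟨i - 1, by omega⟩ : Fin k)} (idx k (i - 1))
        < condMI (joint W x0 pX k) {(⟨j - 1, by omega⟩ : Fin k)} (idx k (j - 1)) := by
  intro i j k hi hij hjk hkK
  classical
  set h : ℕ → ℝ := fun m => entropy (margXY (joint W x0 pX k) (idx k m)) with hh
  set e : ℕ → ℝ := fun m => entropy (margX (joint W x0 pX k) (idx k m)) with he
  have hcondMI : ∀ (m : ℕ) (hm : m < k),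
      condMI (joint W x0 pX k) {(⟨m, hm⟩ : Fin k)} (idx k m)
        = (h m - e m) - (h (m + 1) - e (m + 1)) := by
    intro m hm
    rw [condMI, RACAux.union_idx hm]
  have hestep : ∀ m, m < k → e (m + 1) = entropy pX + e m := fun m hm =>
    RACAux.margX_entropy_step W x0 pX hW1 hp1 hm
  have hkey := fun (m : ℕ) (hm : m + 2 ≤ k) =>
    RACAux.key W x0 pX hkK hW0 hW1 hp0 hp1 hperm m hm
  have hmono : ∀ m1 m2 : ℕ, m1 ≤ m2 → m2 + 1 ≤ k →
      h m1 - h (m1 + 1) ≤ h m2 - h (m2 + 1) := by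
    intro m1 m2 hle
    induction m2, hle using Nat.le_induction with
    | base => exact fun _ => le_rfl
    | succ m hm ih =>
      intro hk2
      have h1 := ih (by omega)
      have h2 := (hkey m (by omega)).1
      have hr : m + 1 + 1 = m + 2 := rfl
      rw [hr]
      linarith
  have ha1k : i - 1 < k := by omega
  have hb1k : j - 1 < k := by omega
  rw [hcondMI (i - 1) ha1k, hcondMI (j - 1) hb1k,
    hestep (i - 1) (by omega), hestep (j - 1) (by omega)]
  have hsuff : h (i - 1) - h (i - 1 + 1) < h (j - 1) - h (j - 1 + 1) := by
    by_contra hns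
    push_neg at hns
    have h1 : h (i - 1) - h (i - 1 + 1) ≤ h (i - 1 + 1) - h (i - 1 + 2) := by
      have := (hkey (i - 1) (by omega)).1
      linarith
    have h2 : h (i - 1 + 1) - h (i - 1 + 1 + 1) ≤ h (j - 1) - h (j - 1 + 1) :=
      hmono (i - 1 + 1) (j - 1) (by omega) (by omega)
    have hr : i - 1 + 1 + 1 = i - 1 + 2 := rfl
    rw [hr] at h2
    have heq2 : h (i - 1 + 2) + h (i - 1)
        = h (i - 1 + 1) + h (i - 1 + 1) := by linarith
    have hfac := (hkey (i - 1) (by omega)).2 heq2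
    obtain ⟨y0, hy0, xw, hne⟩ :=
      hinter k hkK (i - 1 + 1) (i - 1 + 2) (by omega) (by omega) (by omega)
    have hval := hfac y0 xw
    apply hne
    have ho : outP W x0 pX k y0 ≠ 0 := ne_of_gt hy0
    rw [div_mul_div_comm, ← hval, mul_div_mul_right _ _ ho]
  linarith
end
end

section
/- Let 𝒳 and 𝒴 be finite nonempty types, let p be a pmf on 𝒳, and let A, B : 𝒳 × 𝒴 → ℝ be channels (for each x, A(x,·) and B(x,·) are nonnegative and sum to 1). Define output marginals a(y) := Σ_x p(x)A(x,y) and b(y) := Σ_x p(x)B(x,y). Assume that B(x,y) > 0 whenever p(x)A(x,y) > 0. Then Σ_{x,y} p(x)A(x,y)·ln( B(x,y)/b(y) ) ≤ Σ_{x,y} p(x)A(x,y)·ln( A(x,y)/a(y) ), where terms with p(x)A(x,y) = 0 are taken to be 0 (the right-hand side is the mutual information of the joint pmf p(x)A(x,y)). -/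
/-- Mismatched information density has smaller expectation than the
true mutual information: `Σ p(x)A(x,y)·ln(B(x,y)/b(y)) ≤ Σ p(x)A(x,y)·ln(A(x,y)/a(y))`
whenever `B(x,y) > 0` on the support of `p(x)A(x,y)`.  (Summands with
`p(x)A(x,y) = 0` vanish automatically since the leading factor is `0`.) -/
theorem mismatched_MI_le_MI
    {𝓧 𝓨 : Type*} [Fintype 𝓧] [Fintype 𝓨] [Nonempty 𝓧] [Nonempty 𝓨]
    (p : 𝓧 → ℝ) (A B : 𝓧 → 𝓨 → ℝ)
    (hp0 : ∀ x, 0 ≤ p x) (hp1 : ∑ x, p x = 1)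
    (hA0 : ∀ x y, 0 ≤ A x y) (hA1 : ∀ x, ∑ y, A x y = 1)
    (hB0 : ∀ x y, 0 ≤ B x y) (hB1 : ∀ x, ∑ y, B x y = 1)
    (habs : ∀ x y, 0 < p x * A x y → 0 < B x y) :
    ∑ x, ∑ y, p x * A x y * Real.log (B x y / (∑ x', p x' * B x' y))
      ≤ ∑ x, ∑ y, p x * A x y * Real.log (A x y / (∑ x', p x' * A x' y)) := by
  set a : 𝓨 → ℝ := fun y => ∑ x', p x' * A x' y with ha
  set b : 𝓨 → ℝ := fun y => ∑ x', p x' * B x' y with hb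
  have ha0 : ∀ y, 0 ≤ a y := fun y =>
    Finset.sum_nonneg fun x _ => mul_nonneg (hp0 x) (hA0 x y)
  have hale : ∀ x y, p x * A x y ≤ a y := fun x y =>
    Finset.single_le_sum (f := fun x' => p x' * A x' y)
      (fun x' _ => mul_nonneg (hp0 x') (hA0 x' y)) (Finset.mem_univ x)
  have hble : ∀ x y, p x * B x y ≤ b y := fun x y =>
    Finset.single_le_sum (f := fun x' => p x' * B x' y)
      (fun x' _ => mul_nonneg (hp0 x') (hB0 x' y)) (Finset.mem_univ x)
  have hpos : ∀ x y, 0 < p x * A x y → 0 < p x ∧ 0 < A x y := by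
    intro x y h
    constructor
    · rcases (hp0 x).lt_or_eq with h1 | h1
      · exact h1
      · rw [← h1] at h; simp at h
    · rcases (hA0 x y).lt_or_eq with h1 | h1
      · exact h1
      · rw [← h1] at h; simp at h
  set g : 𝓧 → 𝓨 → ℝ :=
    fun x y => if 0 < p x * A x y then p x * B x y * (a y / b y) else 0 with hg
  have key : ∀ x y, p x * A x y * Real.log (B x y / b y)
      ≤ p x * A x y * Real.log (A x y / a y) + (g x y - p x * A x y) := by
    intro x y
    by_cases h : 0 < p x * A x y
    · obtain ⟨hp, hA⟩ := hpos x y h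
      have hB : 0 < B x y := habs x y h
      have hay : 0 < a y := lt_of_lt_of_le h (hale x y)
      have hby : 0 < b y := lt_of_lt_of_le (mul_pos hp hB) (hble x y)
      have hlog : Real.log (B x y / b y) =
          Real.log (A x y / a y) + Real.log ((B x y * a y) / (b y * A x y)) := by
        rw [Real.log_div hB.ne' hby.ne', Real.log_div hA.ne' hay.ne',
            Real.log_div (by positivity) (by positivity),
            Real.log_mul hB.ne' hay.ne', Real.log_mul hby.ne' hA.ne']
        ring
      have hle : Real.log ((B x y * a y) / (b y * A x y))
          ≤ (B x y * a y) / (b y * A x y) - 1 :=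
        Real.log_le_sub_one_of_pos (by positivity)
      have hmul := mul_le_mul_of_nonneg_left hle h.le
      have hgval : g x y = p x * B x y * (a y / b y) := if_pos h
      have heq : p x * A x y * ((B x y * a y) / (b y * A x y) - 1)
          = g x y - p x * A x y := by
        rw [hgval]; field_simp
      rw [hlog]
      nlinarith [hmul, heq]
    · have h0 : p x * A x y = 0 :=
        le_antisymm (not_lt.1 h) (mul_nonneg (hp0 x) (hA0 x y))
      simp [hg, h, h0]
  have hsum1 : ∑ x, ∑ y, p x * A x y = 1 := by
    simp only [← Finset.mul_sum, hA1, mul_one, hp1]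
  have hg_le : ∀ y, ∑ x, g x y ≤ a y := by
    intro y
    by_cases hby : 0 < b y
    · have h1 : ∑ x, g x y ≤ ∑ x, p x * B x y * (a y / b y) := by
        refine Finset.sum_le_sum fun x _ => ?_
        by_cases h : 0 < p x * A x y
        · simp [hg, h]
        · simp only [hg, h, if_false]
          have := hp0 x; have := hB0 x y; have := ha0 y
          positivity
      have h2 : ∑ x, p x * B x y * (a y / b y) = a y := by
        rw [← Finset.sum_mul]
        have hbe : (∑ i, p i * B i y) = b y := rfl
        rw [hbe]
        field_simp
      linarith
    · have hz : ∀ x, g x y = 0 := by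
        intro x
        by_cases h : 0 < p x * A x y
        · exact absurd (lt_of_lt_of_le (mul_pos (hpos x y h).1 (habs x y h))
            (hble x y)) hby
        · simp [hg, h]
      simp only [hz, Finset.sum_const_zero]
      exact ha0 y
  have hgsum : ∑ x, ∑ y, g x y ≤ 1 := by
    rw [Finset.sum_comm]
    calc ∑ y, ∑ x, g x y ≤ ∑ y, a y := Finset.sum_le_sum fun y _ => hg_le y
      _ = ∑ x, ∑ y, p x * A x y := by rw [ha, Finset.sum_comm]
      _ = 1 := hsum1
  calc ∑ x, ∑ y, p x * A x y * Real.log (B x y / b y)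
      ≤ ∑ x, ∑ y, (p x * A x y * Real.log (A x y / a y) + (g x y - p x * A x y)) :=
        Finset.sum_le_sum fun x _ => Finset.sum_le_sum fun y _ => key x y
    _ = (∑ x, ∑ y, p x * A x y * Real.log (A x y / a y))
        + ((∑ x, ∑ y, g x y) - ∑ x, ∑ y, p x * A x y) := by
        simp [Finset.sum_add_distrib, Finset.sum_sub_distrib]
    _ ≤ ∑ x, ∑ y, p x * A x y * Real.log (A x y / a y) := by
        rw [hsum1]; linarith
end

section
/- Fix δ ∈ [0,1] and an integer k ≥ 1. Consider the adder-erasure channel with i.i.d. Bernoulli(1/2) inputs: the joint pmf of (X_{[k]}, Y) on {0,1}^k × ({0,…,k} ∪ {e}) is P(x, i) = 2^{−k}·(1−δ)·1{ Σ_j x_j = i } for i ∈ {0,…,k} and P(x, e) = 2^{−k}·δ. Let ı(x, y) := ln( P_{Y|X}(y|x) / P_Y(y) ) for pairs with P(x,y) > 0 (here P_{Y|X}(i|x) = (1−δ)·1{Σx_j = i}, P_{Y|X}(e|x) = δ, P_Y(i) = (1−δ)C(k,i)2^{−k}, P_Y(e) = δ). Then the variance of ı under the joint pmf P equals (1−δ)·[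 V_Z + δ·H_Z² ], where H_Z := Σ_{i=0}^{k} (C(k,i)/2^k)·ln( 2^k / C(k,i) ) and V_Z := Σ_{i=0}^{k} (C(k,i)/2^k)·ln²( 2^k / C(k,i) ) − H_Z² are the entropy and varentropy of the Binomial(k, 1/2) distribution. -/
noncomputable section

/-- Joint pmf of inputs and output of the adder-erasure channel with erasure
probability `δ` and i.i.d. `Bernoulli(1/2)` inputs: output `some i` when
`Σ_j x_j = i` (w.p. `1−δ`), `none` = erasure. -/
def adderJointHalf (δ : ℝ) (k : ℕ)
    (z : (Fin k → Fin 2) × Option (Fin (k + 1))) : ℝ :=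
  (2 : ℝ)⁻¹ ^ k *
    (match z.2 with
      | some i => (1 - δ) * (if (∑ j, ((z.1 j : ℕ))) = (i : ℕ) then 1 else 0)
      | none => δ)

/-- Information density `ı(x,y) = ln(P_{Y|X}(y|x)/P_Y(y))`, with
`P_{Y|X}(i|x) = (1−δ)·1{Σx_j = i}`, `P_{Y|X}(e|x) = δ`,
`P_Y(i) = (1−δ)·C(k,i)·2^{−k}`, `P_Y(e) = δ`. -/
def adderDensity (δ : ℝ) (k : ℕ)
    (z : (Fin k → Fin 2) × Option (Fin (k + 1))) : ℝ :=
  match z.2 with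
    | some i => Real.log (((1 - δ) * (if (∑ j, ((z.1 j : ℕ))) = (i : ℕ) then 1 else 0))
        / ((1 - δ) * (k.choose (i : ℕ) : ℝ) / 2 ^ k))
    | none => Real.log (δ / δ)

/-- Shannon entropy (nats) of the `Binomial(k, 1/2)` distribution. -/
def binomH (k : ℕ) : ℝ :=
  ∑ i ∈ Finset.range (k + 1),
    ((k.choose i : ℝ) / 2 ^ k) * Real.log ((2 : ℝ) ^ k / (k.choose i : ℝ))

/-- Varentropy (nats²) of the `Binomial(k, 1/2)` distribution. -/
def binomV (k : ℕ) : ℝ :=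
  (∑ i ∈ Finset.range (k + 1),
      ((k.choose i : ℝ) / 2 ^ k) * (Real.log ((2 : ℝ) ^ k / (k.choose i : ℝ))) ^ 2)
    - (binomH k) ^ 2

lemma fin2_cast (a : Fin 2) : (a : ℕ) = if a = 1 then 1 else 0 := by
  fin_cases a <;> simp

lemma count_sum (k i : ℕ) :
    ((Finset.univ.filter (fun x : Fin k → Fin 2 => (∑ j, ((x j : ℕ))) = i)).card : ℕ)
      = k.choose i := by
  have h := Finset.card_powersetCard i (Finset.univ : Finset (Fin k))
  rw [Finset.card_univ, Fintype.card_fin] at h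
  rw [← h]
  apply Finset.card_bij' (fun x _ => Finset.univ.filter (fun j => x j = 1))
    (fun s _ => fun j => if j ∈ s then 1 else 0)
  · intro x hx
    funext j
    by_cases hj : x j = 1 <;> simp [hj]
    omega
  · intro s hs
    ext j
    simp
  · intro x hx
    simp only [Finset.mem_filter, Finset.mem_univ, true_and] at hx
    simp only [Finset.mem_powersetCard, Finset.subset_univ, true_and]
    rw [Finset.card_filter, ← hx]
    exact Finset.sum_congr rfl fun j _ => (fin2_cast (x j)).symm
  · intro s hs
    simp only [Finset.mem_powersetCard] at hs
    simp only [Finset.mem_filter, Finset.mem_univ, true_and]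
    rw [← hs.2, Finset.card_eq_sum_ones]
    simp only [apply_ite (fun a : Fin 2 => (a : ℕ))]
    simp [Finset.sum_ite_mem]

lemma density_none (δ : ℝ) (k : ℕ) (x : Fin k → Fin 2) :
    adderDensity δ k (x, none) = 0 := by
  show Real.log (δ / δ) = 0
  rcases eq_or_ne δ 0 with h | h
  · simp [h]
  · rw [div_self h, Real.log_one]

lemma moment_sum (δ : ℝ) (hδ1 : δ < 1) (k : ℕ) (φ : ℝ → ℝ) (hφ : φ 0 = 0) :
    (∑ z : (Fin k → Fin 2) × Option (Fin (k + 1)),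
        adderJointHalf δ k z * φ (adderDensity δ k z))
      = (1 - δ) * ∑ i ∈ Finset.range (k + 1),
          ((k.choose i : ℝ) / 2 ^ k) *
            φ (Real.log ((2 : ℝ) ^ k / (k.choose i : ℝ))) := by
  have h1 : (0 : ℝ) < 1 - δ := by linarith
  rw [Fintype.sum_prod_type]
  have step : ∀ x : Fin k → Fin 2,
      (∑ y : Option (Fin (k + 1)), adderJointHalf δ k (x, y) * φ (adderDensity δ k (x, y)))
        = ∑ i : Fin (k + 1), (2 : ℝ)⁻¹ ^ k * (1 - δ) *
            (if (∑ j, ((x j : ℕ))) = (i : ℕ) then 1 else 0) *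
            φ (Real.log ((2 : ℝ) ^ k / (k.choose (i : ℕ) : ℝ))) := by
    intro x
    rw [Fintype.sum_option]
    rw [density_none, hφ, mul_zero, zero_add]
    apply Finset.sum_congr rfl
    intro i _
    by_cases hi : (∑ j, ((x j : ℕ))) = (i : ℕ)
    · have hc : (0 : ℝ) < (k.choose (i : ℕ) : ℝ) := by
        exact_mod_cast Nat.choose_pos (Nat.lt_succ_iff.mp i.isLt)
      have harg : ((1 - δ) * (1:ℝ)) / ((1 - δ) * (k.choose (i : ℕ) : ℝ) / 2 ^ k)
          = (2 : ℝ) ^ k / (k.choose (i : ℕ) : ℝ) := by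
        field_simp
      show (2 : ℝ)⁻¹ ^ k * ((1 - δ) * _) * φ (Real.log _) = _
      simp only [if_pos hi]
      rw [harg]
      ring
    · show (2 : ℝ)⁻¹ ^ k * ((1 - δ) * _) * φ (Real.log _) = _
      simp [hi]
  simp_rw [step]
  rw [Finset.sum_comm]
  have count : ∀ i : Fin (k + 1),
      (∑ x : Fin k → Fin 2, (if (∑ j, ((x j : ℕ))) = (i : ℕ) then (1:ℝ) else 0))
        = (k.choose (i : ℕ) : ℝ) := by
    intro i
    rw [Finset.sum_boole]
    exact_mod_cast count_sum k (i : ℕ)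
  have inner : ∀ i : Fin (k + 1),
      (∑ x : Fin k → Fin 2, ((2 : ℝ)⁻¹ ^ k * (1 - δ) *
          (if (∑ j, ((x j : ℕ))) = (i : ℕ) then (1:ℝ) else 0)) *
          φ (Real.log ((2 : ℝ) ^ k / (k.choose (i : ℕ) : ℝ))))
        = (1 - δ) * (((k.choose (i : ℕ) : ℝ) / 2 ^ k) *
            φ (Real.log ((2 : ℝ) ^ k / (k.choose (i : ℕ) : ℝ)))) := by
    intro i
    have : ∀ x : Fin k → Fin 2, ((2 : ℝ)⁻¹ ^ k * (1 - δ) *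
          (if (∑ j, ((x j : ℕ))) = (i : ℕ) then (1:ℝ) else 0)) *
          φ (Real.log ((2 : ℝ) ^ k / (k.choose (i : ℕ) : ℝ)))
        = ((2 : ℝ)⁻¹ ^ k * (1 - δ) *
            φ (Real.log ((2 : ℝ) ^ k / (k.choose (i : ℕ) : ℝ)))) *
          (if (∑ j, ((x j : ℕ))) = (i : ℕ) then (1:ℝ) else 0) := by
      intro x; ring
    simp_rw [this]
    rw [← Finset.mul_sum, count i]
    rw [inv_pow]
    have h2k : ((2:ℝ) ^ k) ≠ 0 := by positivity
    field_simp
  calc (∑ i : Fin (k + 1), ∑ x : Fin k → Fin 2, ((2 : ℝ)⁻¹ ^ k * (1 - δ) *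
          (if (∑ j, ((x j : ℕ))) = (i : ℕ) then (1:ℝ) else 0)) *
          φ (Real.log ((2 : ℝ) ^ k / (k.choose (i : ℕ) : ℝ))))
      = ∑ i : Fin (k + 1), (1 - δ) * (((k.choose (i : ℕ) : ℝ) / 2 ^ k) *
            φ (Real.log ((2 : ℝ) ^ k / (k.choose (i : ℕ) : ℝ)))) :=
        Finset.sum_congr rfl fun i _ => inner i
    _ = (1 - δ) * ∑ i : Fin (k + 1), (((k.choose (i : ℕ) : ℝ) / 2 ^ k) *
            φ (Real.log ((2 : ℝ) ^ k / (k.choose (i : ℕ) : ℝ)))) := by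
        rw [Finset.mul_sum]
    _ = _ := congrArg _ (Fin.sum_univ_eq_sum_range
          (fun i => ((k.choose i : ℝ) / 2 ^ k) *
            φ (Real.log ((2 : ℝ) ^ k / (k.choose i : ℝ)))) (k + 1))

/-- The variance of the information density of the adder-erasure
channel with i.i.d. `Bernoulli(1/2)` inputs equals `(1−δ)·(V_Z + δ·H_Z²)`. -/
theorem adder_erasure_density_variance
    (δ : ℝ) (hδ0 : 0 ≤ δ) (hδ1 : δ ≤ 1) (k : ℕ) (hk : 1 ≤ k) :
    (∑ z : (Fin k → Fin 2) × Option (Fin (k + 1)),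
          adderJointHalf δ k z * (adderDensity δ k z) ^ 2)
        - (∑ z : (Fin k → Fin 2) × Option (Fin (k + 1)),
            adderJointHalf δ k z * adderDensity δ k z) ^ 2
      = (1 - δ) * (binomV k + δ * (binomH k) ^ 2) := by
  rcases eq_or_lt_of_le hδ1 with h1 | h1
  · subst h1
    have hz : ∀ (m : ℕ) (z : (Fin k → Fin 2) × Option (Fin (k + 1))), 1 ≤ m →
        adderJointHalf 1 k z * (adderDensity 1 k z) ^ m = 0 := by
      intro m ⟨x, y⟩ hm
      cases y with
      | none =>
          rw [density_none]
          simp [zero_pow (by omega : m ≠ 0)]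
      | some i =>
          show (2 : ℝ)⁻¹ ^ k * ((1 - 1) * _) * _ = 0
          simp
    have e2 : (∑ z : (Fin k → Fin 2) × Option (Fin (k + 1)),
        adderJointHalf 1 k z * (adderDensity 1 k z) ^ 2) = 0 :=
      Finset.sum_eq_zero fun z _ => hz 2 z (by norm_num)
    have e1 : (∑ z : (Fin k → Fin 2) × Option (Fin (k + 1)),
        adderJointHalf 1 k z * adderDensity 1 k z) = 0 := by
      apply Finset.sum_eq_zero
      intro z _
      have := hz 1 z le_rfl
      rwa [pow_one] at this
    rw [e1, e2]; ring
  · have m2 := moment_sum δ h1 k (fun a => a ^ 2) (by norm_num)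
    have m1 := moment_sum δ h1 k (fun a => a) rfl
    rw [m1, m2]
    unfold binomV binomH
    ring
end
end
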